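/- Let ν, γ be real numbers with ν ≥ 1 and γ ≥ 0, and set r = 0. Let σ := !![0, 1; -1, 0], Γ := diag(ν, ν), K := −γ·I + 2γ·Γ⁻¹, and M^Bayes := 2γ·I + i·(K·σ + σ·Kᵀ) as a 2×2 complex matrix. Then M^Bayes is positive semidefinite; i.e., for unsqueezed thermal references the CP obstruction never activates. -/

import Mathlib

open Matrix Complex
open scoped ComplexOrder

/-- The one-mode symplectic form in HHW conventions, as a complex matrix. -/
noncomputable def symp : Matrix (Fin 2) (Fin 2) ℂ := !![0, 1; -1, 0]

/-- Thermal reference covariance `diag(ν, ν)` (the `r = 0` squeezed-thermal covariance). -/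
noncomputable def GamThermal (ν : ℝ) : Matrix (Fin 2) (Fin 2) ℂ :=
  Matrix.diagonal ![((ν : ℝ) : ℂ), ((ν : ℝ) : ℂ)]

/-- Bayes reverse drift `K = -γ I + 2γ Γ⁻¹` at `r = 0`. -/
noncomputable def KbayesThermal (ν γ : ℝ) : Matrix (Fin 2) (Fin 2) ℂ :=
  (-(γ : ℂ)) • (1 : Matrix (Fin 2) (Fin 2) ℂ) + ((2 * γ : ℝ) : ℂ) • (GamThermal ν)⁻¹

/-- Generator CP matrix `M^Bayes = 2γ I + i (K σ + σ Kᵀ)` at `r = 0`. -/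
noncomputable def MBayesThermal (ν γ : ℝ) : Matrix (Fin 2) (Fin 2) ℂ :=
  ((2 * γ : ℝ) : ℂ) • (1 : Matrix (Fin 2) (Fin 2) ℂ) +
    Complex.I • (KbayesThermal ν γ * symp + symp * (KbayesThermal ν γ)ᵀ)

lemma MBayes_eq (ν γ : ℝ) (hν : 1 ≤ ν) :
    MBayesThermal ν γ =
      !![((2*γ:ℝ):ℂ), ((2*γ/ν - 2*γ*(ν-1)/ν : ℝ):ℂ) * Complex.I;
         -(((2*γ/ν - 2*γ*(ν-1)/ν : ℝ):ℂ) * Complex.I), ((2*γ:ℝ):ℂ)] := by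
  have hνR : (ν:ℝ) ≠ 0 := by positivity
  have hν0 : ((ν:ℝ):ℂ) ≠ 0 := by exact_mod_cast hνR
  have hinv : (GamThermal ν)⁻¹ = (((ν:ℝ):ℂ))⁻¹ • (1 : Matrix (Fin 2) (Fin 2) ℂ) := by
    apply Matrix.inv_eq_right_inv
    ext i j
    fin_cases i <;> fin_cases j <;>
      simp [GamThermal, Matrix.one_apply, hν0, mul_inv_cancel₀]
  simp only [MBayesThermal, KbayesThermal, hinv]
  ext i j
  fin_cases i <;> fin_cases j <;>
    · simp [symp, Matrix.mul_apply, Matrix.vecMul, dotProduct, Fin.sum_univ_succ,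
        Matrix.one_apply]
      try push_cast [hνR]
      try field_simp
      try ring

/-- For unsqueezed thermal references (`r = 0`, `ν ≥ 1`, `γ ≥ 0`) the Bayes reverse
generator CP matrix is positive semidefinite: the CP obstruction never activates. -/
theorem MBayesThermal_posSemidef (ν γ : ℝ) (hν : 1 ≤ ν) (hγ : 0 ≤ γ) :
    (MBayesThermal ν γ).PosSemidef := by
  have hνR : (ν:ℝ) ≠ 0 := by positivity
  set p : ℝ := 2*γ/ν with hp
  set q : ℝ := 2*γ*(ν-1)/ν with hq
  have hp0 : 0 ≤ p := by positivity
  have hq0 : 0 ≤ q := by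
    apply div_nonneg _ (by linarith)
    have : 0 ≤ ν - 1 := by linarith
    positivity
  have hpq : p + q = 2*γ := by rw [hp, hq]; field_simp; ring
  set C : Matrix (Fin 2) (Fin 2) ℂ :=
    !![((Real.sqrt p : ℝ):ℂ), ((Real.sqrt p : ℝ):ℂ) * Complex.I;
       ((Real.sqrt q : ℝ):ℂ), -(((Real.sqrt q : ℝ):ℂ) * Complex.I)] with hC
  have key : MBayesThermal ν γ = Cᴴ * C := by
    rw [MBayes_eq ν γ hν]
    have hsp : ((Real.sqrt p : ℝ):ℂ) * ((Real.sqrt p : ℝ):ℂ) = (p:ℂ) := by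
      rw [← Complex.ofReal_mul, Real.mul_self_sqrt hp0]
    have hsq : ((Real.sqrt q : ℝ):ℂ) * ((Real.sqrt q : ℝ):ℂ) = (q:ℂ) := by
      rw [← Complex.ofReal_mul, Real.mul_self_sqrt hq0]
    ext i j
    fin_cases i <;> fin_cases j <;>
      · simp [hC, Matrix.mul_apply, Matrix.conjTranspose_apply, Fin.sum_univ_succ,
          Complex.ext_iff, Complex.mul_re, Complex.mul_im]
        rw [Real.mul_self_sqrt hp0, Real.mul_self_sqrt hq0, hp, hq]
        field_simp
        ring
  rw [key]
  exact Matrix.posSemidef_conjTranspose_mul_self C
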